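/- Suppose M, S, G : ℝ → ℝ and D : ℝ → ℝ are differentiable, nonnegative functions satisfying the delayed RNAi system for all t ≥ 0, and suppose there exist T > 0 and D̂ > 0 such that D(t) ≤ D̂ for all t ≥ T. Then there exist constants M̂, Ŝ, Ĝ > 0 such that M(t) ≤ M̂, S(t) ≤ Ŝ and G(t) ≤ Ĝ for all t ≥ T. -/

import Mathlib

lemma decay_bound (f : ℝ → ℝ) (hf : Differentiable ℝ f) (k c T : ℝ) (hk : 0 < k)
    (hd : ∀ t, T ≤ t → deriv f t ≤ c - k * f t) :
    ∀ t, T ≤ t → f t ≤ max (f T) (c / k) := by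
  set φ : ℝ → ℝ := fun t => (f t - c / k) * Real.exp (k * t) with hφ
  have key : ∀ t, HasDerivAt φ
      ((deriv f t) * Real.exp (k * t) + (f t - c / k) * (k * Real.exp (k * t))) t := by
    intro t
    have h1 : HasDerivAt (fun t => f t - c / k) (deriv f t) t :=
      ((hf t).hasDerivAt).sub_const _
    have h2 : HasDerivAt (fun t : ℝ => Real.exp (k * t)) (k * Real.exp (k * t)) t := by
      have hlin : HasDerivAt (fun t : ℝ => k * t) k t := by
        simpa using (hasDerivAt_id t).const_mul k
      have := (Real.hasDerivAt_exp (k * t)).comp t hlin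
      rw [mul_comm (Real.exp _)] at this
      exact this
    exact h1.mul h2
  have hφdiff : Differentiable ℝ φ := fun t => (key t).differentiableAt
  have hφanti : AntitoneOn φ (Set.Ici T) := by
    apply antitoneOn_of_deriv_nonpos (convex_Ici T) hφdiff.continuous.continuousOn
      (fun x _ => (hφdiff x).differentiableWithinAt)
    intro x hx
    rw [interior_Ici] at hx
    rw [(key x).deriv]
    have hdx := hd x hx.le
    have hexp : (0:ℝ) < Real.exp (k * x) := Real.exp_pos _
    have hc : c / k * k = c := div_mul_cancel₀ c hk.ne'
    nlinarith [mul_le_mul_of_nonneg_right hdx hexp.le]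
  intro t ht
  have hmono := hφanti (Set.self_mem_Ici) ht ht
  simp only [hφ] at hmono
  have hexpt : (0:ℝ) < Real.exp (k * t) := Real.exp_pos _
  have hexpT : (0:ℝ) < Real.exp (k * T) := Real.exp_pos _
  rcases le_or_gt (f T) (c / k) with hle | hgt
  · have : (f t - c / k) * Real.exp (k * t) ≤ 0 := by nlinarith
    have : f t ≤ c / k := by nlinarith
    exact this.trans (le_max_right _ _)
  · have hexple : Real.exp (k * T) ≤ Real.exp (k * t) :=
      Real.exp_le_exp.mpr (by nlinarith)
    have : f t ≤ f T := by nlinarith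
    exact this.trans (le_max_left _ _)

/-- If the nonnegative differentiable solutions of the delayed RNAi
system have `D` bounded by `D̂` for `t ≥ T`, then `M`, `S` and `G` are bounded for
`t ≥ T`. -/
theorem rnai_boundedness
    (h p a b1 b2 b3 dm ds dg n1 n2 n3 τ1 τ2 : ℝ)
    (hh : 0 < h) (hp : 0 < p) (ha : 0 < a) (hb1 : 0 < b1) (hb2 : 0 < b2)
    (hb3 : 0 < b3) (hdm : 0 < dm) (hds : 0 < ds) (hdg : 0 < dg)
    (hn1 : 0 < n1) (hn2 : 0 < n2) (hn3 : 0 < n3)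
    (hτ1 : 0 ≤ τ1) (hτ2 : 0 ≤ τ2)
    (M D S G : ℝ → ℝ)
    (hMdiff : Differentiable ℝ M) (hDdiff : Differentiable ℝ D)
    (hSdiff : Differentiable ℝ S) (hGdiff : Differentiable ℝ G)
    (hMnn : ∀ t, 0 ≤ M t) (hDnn : ∀ t, 0 ≤ D t)
    (hSnn : ∀ t, 0 ≤ S t) (hGnn : ∀ t, 0 ≤ G t)
    (heqM : ∀ t, 0 ≤ t →
      deriv M t = n1 * h - dm * M t - p * M t - b1 * S t * M t - b2 * S t * M t)
    (heqD : ∀ t, 0 ≤ t →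
      deriv D t = p * M t - a * D t + b2 * S (t - τ1) * M (t - τ1)
        + b3 * S (t - τ2) * G (t - τ2))
    (heqS : ∀ t, 0 ≤ t →
      deriv S t = n2 * a * D t - ds * S t - b1 * S t * M t - b2 * S t * M t
        - b3 * S t * G t)
    (heqG : ∀ t, 0 ≤ t →
      deriv G t = n3 * b1 * S t * M t - dg * G t - b3 * S t * G t)
    (T Dhat : ℝ) (hT : 0 < T) (hDhat : 0 < Dhat)
    (hDbdd : ∀ t, T ≤ t → D t ≤ Dhat) :
    ∃ Mhat Shat Ghat : ℝ, 0 < Mhat ∧ 0 < Shat ∧ 0 < Ghat ∧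
      ∀ t, T ≤ t → M t ≤ Mhat ∧ S t ≤ Shat ∧ G t ≤ Ghat := by
  set Mhat : ℝ := max (M T) (n1 * h / dm) with hMhat
  set Shat : ℝ := max (S T) (n2 * a * Dhat / ds) with hShat
  set Ghat : ℝ := max (G T) (n3 * b1 * Shat * Mhat / dg) with hGhat
  have hMbdd : ∀ t, T ≤ t → M t ≤ Mhat := by
    apply decay_bound M hMdiff dm (n1 * h) T hdm
    intro t ht
    have h0 : (0:ℝ) ≤ t := le_trans hT.le ht
    rw [heqM t h0]
    nlinarith [hMnn t, hSnn t, mul_nonneg (hSnn t) (hMnn t)]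
  have hSbdd : ∀ t, T ≤ t → S t ≤ Shat := by
    apply decay_bound S hSdiff ds (n2 * a * Dhat) T hds
    intro t ht
    have h0 : (0:ℝ) ≤ t := le_trans hT.le ht
    rw [heqS t h0]
    nlinarith [mul_le_mul_of_nonneg_left (hDbdd t ht) (by positivity : (0:ℝ) ≤ n2 * a), hMnn t, hSnn t, hGnn t,
      mul_nonneg (hSnn t) (hMnn t), mul_nonneg (hSnn t) (hGnn t)]
  have hMhatpos : 0 < Mhat := lt_of_lt_of_le (by positivity) (le_max_right _ _)
  have hShatpos : 0 < Shat := lt_of_lt_of_le (by positivity) (le_max_right _ _)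
  have hGbdd : ∀ t, T ≤ t → G t ≤ Ghat := by
    apply decay_bound G hGdiff dg (n3 * b1 * Shat * Mhat) T hdg
    intro t ht
    have h0 : (0:ℝ) ≤ t := le_trans hT.le ht
    rw [heqG t h0]
    have hSM : S t * M t ≤ Shat * Mhat :=
      mul_le_mul (hSbdd t ht) (hMbdd t ht) (hMnn t) hShatpos.le
    nlinarith [mul_le_mul_of_nonneg_left hSM (by positivity : (0:ℝ) ≤ n3 * b1),
      hGnn t, mul_nonneg (hSnn t) (hGnn t)]
  have hGhatpos : 0 < Ghat := lt_of_lt_of_le (by positivity) (le_max_right _ _)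
  exact ⟨Mhat, Shat, Ghat, hMhatpos, hShatpos, hGhatpos,
    fun t ht => ⟨hMbdd t ht, hSbdd t ht, hGbdd t ht⟩⟩
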